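/- Let (λ_j)_{j≥1} be a nondecreasing sequence of positive reals, α ∈ (0,1), N ≥ 1, and k > 0. Set γ = (λ_{N+1}^{1+α} + λ_N^{1+α})/2 and, for v ∈ ℓ² with Σ_j λ_j^{1+α} v_j² < ∞, write q = Q_N v. Then: (i) if λ_{N+1} − λ_N ≥ 1, then ‖A^{(1+α)/2} R_{k,N} q‖² − γ·‖R_{k,N} q‖² ≥ ((1+α)/2)·λ_N^α·‖R_{k,N} q‖²; and (ii) if L ≥ 0, k ≥ 2L and λ_{N+1} ≤ λ_N + 2L, then ‖A^{(1+α)/2} Q_{k,N} v‖² − γ·‖Q_{k,N} v‖² ≥ (1+α)·(k − 2L)·λ_{N+1}^α·‖Q_{k,N} v‖². -/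

import Mathlib

noncomputable section

/-- `Plow N v` keeps the entries with index `j ≤ N` (the projector `P_N`). -/
def Plow (N : ℕ+) (v : ℕ+ → ℝ) : ℕ+ → ℝ := fun j => if j ≤ N then v j else 0

/-- `Qhigh N v` keeps the entries with index `j > N` (the projector `Q_N`). -/
def Qhigh (N : ℕ+) (v : ℕ+ → ℝ) : ℕ+ → ℝ := fun j => if j ≤ N then 0 else v j

/-- `PkOp lam k N v` keeps exactly the entries with `λ_j < λ_N − k`. -/
def PkOp (lam : ℕ+ → ℝ) (k : ℝ) (N : ℕ+) (v : ℕ+ → ℝ) : ℕ+ → ℝ :=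
  fun j => if lam j < lam N - k then v j else 0

/-- `RkOp lam k N v` keeps exactly the entries with `λ_N − k ≤ λ_j ≤ λ_N + k`. -/
def RkOp (lam : ℕ+ → ℝ) (k : ℝ) (N : ℕ+) (v : ℕ+ → ℝ) : ℕ+ → ℝ :=
  fun j => if lam N - k ≤ lam j ∧ lam j ≤ lam N + k then v j else 0

/-- `QkOp lam k N v` keeps exactly the entries with `λ_j > λ_N + k`. -/
def QkOp (lam : ℕ+ → ℝ) (k : ℝ) (N : ℕ+) (v : ℕ+ → ℝ) : ℕ+ → ℝ :=
  fun j => if lam N + k < lam j then v j else 0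

/-- Squared `ℓ²` norm. -/
def nsq (v : ℕ+ → ℝ) : ℝ := ∑' j, (v j) ^ 2

/-- Squared norm `‖A^s v‖² = Σ_j λ_j^{2s} v_j²` of the diagonal operator power. -/
def asq (lam : ℕ+ → ℝ) (s : ℝ) (v : ℕ+ → ℝ) : ℝ := ∑' j, lam j ^ (2 * s) * (v j) ^ 2

lemma bern {y x α : ℝ} (hy : 0 < y) (hyx : y ≤ x) (hα : 0 ≤ α) :
    y ^ (1 + α) + (1 + α) * y ^ α * (x - y) ≤ x ^ (1 + α) := by
  have h := one_add_mul_self_le_rpow_one_add (s := (x - y) / y)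
    (by nlinarith [div_nonneg (by linarith : (0:ℝ) ≤ x - y) hy.le]) (p := 1 + α) (by linarith)
  have hx : (1 + (x - y) / y) = x / y := by field_simp; ring
  rw [hx, Real.div_rpow (by linarith) hy.le] at h
  have hyp : 0 < y ^ (1 + α) := Real.rpow_pos_of_pos hy _
  have h2 := (le_div_iff₀ hyp).mp h
  have hya : y ^ (1 + α) = y * y ^ α := by
    rw [Real.rpow_add hy, Real.rpow_one]
  rw [hya] at h2 ⊢
  have : (1 + (1 + α) * ((x - y) / y)) * (y * y ^ α) = y * y ^ α + (1 + α) * y ^ α * (x - y) := by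
    field_simp
  linarith [this ▸ h2]

lemma key_est (lam : ℕ+ → ℝ) (α γ c : ℝ) (w : ℕ+ → ℝ)
    (h2 : Summable fun j => (w j) ^ 2)
    (h1 : Summable fun j => lam j ^ (1 + α) * (w j) ^ 2)
    (hpt : ∀ j, w j ≠ 0 → c + γ ≤ lam j ^ (1 + α)) :
    c * nsq w ≤ asq lam ((1 + α) / 2) w - γ * nsq w := by
  have hexp : (2 * ((1 + α) / 2)) = 1 + α := by ring
  have hasq : asq lam ((1 + α) / 2) w = ∑' j, lam j ^ (1 + α) * (w j) ^ 2 := by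
    unfold asq; rw [hexp]
  rw [hasq]
  unfold nsq
  rw [← tsum_mul_left, ← tsum_mul_left, ← Summable.tsum_sub h1 (h2.mul_left γ)]
  apply Summable.tsum_le_tsum _ (h2.mul_left c) (h1.sub (h2.mul_left γ))
  intro j
  by_cases hj : w j = 0
  · simp [hj]
  · have := hpt j hj
    have := sq_nonneg (w j)
    nlinarith

/-- Estimates (6.22) and (6.23) of Lemma 6.4 of the paper. -/
theorem Iq_estimates
    (lam : ℕ+ → ℝ) (hmono : Monotone lam) (hpos : ∀ j, 0 < lam j)
    (α : ℝ) (hα0 : 0 < α) (hα1 : α < 1)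
    (N : ℕ+) (k : ℝ) (hk : 0 < k)
    (γ : ℝ) (hγ : γ = (lam (N + 1) ^ (1 + α) + lam N ^ (1 + α)) / 2)
    (v : ℕ+ → ℝ)
    (hv2 : Summable fun j => (v j) ^ 2)
    (hv : Summable fun j => lam j ^ (1 + α) * (v j) ^ 2) :
    (1 ≤ lam (N + 1) - lam N →
      ((1 + α) / 2) * lam N ^ α * nsq (RkOp lam k N (Qhigh N v)) ≤
        asq lam ((1 + α) / 2) (RkOp lam k N (Qhigh N v)) -
          γ * nsq (RkOp lam k N (Qhigh N v))) ∧
    (∀ L : ℝ, 0 ≤ L → 2 * L ≤ k → lam (N + 1) ≤ lam N + 2 * L →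
      (1 + α) * (k - 2 * L) * lam (N + 1) ^ α * nsq (QkOp lam k N v) ≤
        asq lam ((1 + α) / 2) (QkOp lam k N v) - γ * nsq (QkOp lam k N v)) := by
  have hα0' : (0:ℝ) ≤ α := hα0.le
  have hlamN1 : lam N ≤ lam (N + 1) := hmono (PNat.lt_add_right N 1).le
  constructor
  · intro hgap
    set w := RkOp lam k N (Qhigh N v) with hw
    have hwle : ∀ j, (w j) ^ 2 ≤ (v j) ^ 2 := by
      intro j
      have h : w j = v j ∨ w j = 0 := by
        simp only [hw, RkOp, Qhigh]
        split
        · split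
          · exact Or.inr rfl
          · exact Or.inl rfl
        · exact Or.inr rfl
      rcases h with h | h <;> rw [h] <;>
        first
        | exact le_refl _
        | simpa using sq_nonneg (v j)
    have h2 : Summable fun j => (w j) ^ 2 :=
      Summable.of_nonneg_of_le (fun j => sq_nonneg _) hwle hv2
    have h1 : Summable fun j => lam j ^ (1 + α) * (w j) ^ 2 := by
      apply Summable.of_nonneg_of_le
        (fun j => mul_nonneg (Real.rpow_nonneg (hpos j).le _) (sq_nonneg _))
        (fun j => mul_le_mul_of_nonneg_left (hwle j) (Real.rpow_nonneg (hpos j).le _)) hv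
    apply key_est lam α γ _ w h2 h1
    intro j hj
    have hjN : ¬ j ≤ N := by
      intro hle
      apply hj
      simp only [hw, RkOp, Qhigh, if_pos hle]
      split <;> rfl
    have hjN' : N + 1 ≤ j := by
      exact PNat.add_one_le_iff.mpr (lt_of_not_ge hjN)
    have hlj : lam (N + 1) ≤ lam j := hmono hjN'
    have hb := bern (hpos N) hlamN1 hα0'
    have hmono2 : lam (N + 1) ^ (1 + α) ≤ lam j ^ (1 + α) :=
      Real.rpow_le_rpow (hpos _).le hlj (by linarith)
    have hpow : (0:ℝ) < lam N ^ α := Real.rpow_pos_of_pos (hpos N) _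
    nlinarith [mul_le_mul_of_nonneg_left hgap (by positivity : (0:ℝ) ≤ (1 + α) * lam N ^ α)]
  · intro L hL hLk hlam
    set w := QkOp lam k N v with hw
    have hwle : ∀ j, (w j) ^ 2 ≤ (v j) ^ 2 := by
      intro j
      have h : w j = v j ∨ w j = 0 := by
        simp only [hw, QkOp]
        split
        · exact Or.inl rfl
        · exact Or.inr rfl
      rcases h with h | h <;> rw [h] <;>
        first
        | exact le_refl _
        | simpa using sq_nonneg (v j)
    have h2 : Summable fun j => (w j) ^ 2 :=
      Summable.of_nonneg_of_le (fun j => sq_nonneg _) hwle hv2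
    have h1 : Summable fun j => lam j ^ (1 + α) * (w j) ^ 2 := by
      apply Summable.of_nonneg_of_le
        (fun j => mul_nonneg (Real.rpow_nonneg (hpos j).le _) (sq_nonneg _))
        (fun j => mul_le_mul_of_nonneg_left (hwle j) (Real.rpow_nonneg (hpos j).le _)) hv
    apply key_est lam α γ _ w h2 h1
    intro j hj
    have hjk : lam N + k < lam j := by
      by_contra hc
      exact hj (by simp only [hw, QkOp, if_neg hc])
    have hgap : lam (N + 1) + (k - 2 * L) ≤ lam j := by linarith
    have hb := bern (hpos (N + 1)) (by linarith : lam (N + 1) ≤ lam j) hα0'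
    have hpow : (0:ℝ) < lam (N + 1) ^ α := Real.rpow_pos_of_pos (hpos _) _
    have hmono2 : lam N ^ (1 + α) ≤ lam (N + 1) ^ (1 + α) :=
      Real.rpow_le_rpow (hpos _).le hlamN1 (by linarith)
    nlinarith [mul_le_mul_of_nonneg_left hgap (by positivity : (0:ℝ) ≤ (1 + α) * lam (N+1) ^ α)]
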